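/- Let P be a shortest uv-trail of a uv-straight graph G and let (s,t) be the twist pair of P. Then every vertex x of the subpath P[s,t] satisfies h(t) ≤ h(x) ≤ h(s). -/

import Mathlib

open SimpleGraph

variable {V : Type*}

/-- A walk is monotone if its vertices have pairwise distinct heights. -/
def MonoWalk (G : SimpleGraph V) (u : V) {x y : V} (W : G.Walk x y) : Prop :=
  (W.support.map (fun z => G.dist u z)).Nodup

/-- `P` is a shortest `x`-`y` path of `G`. -/
def IsShortestPath (G : SimpleGraph V) {x y : V} (P : G.Walk x y) : Prop :=
  P.IsPath ∧ P.length = G.dist x y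

/-- `P` is an induced path of `G`: a path that equals the subgraph of `G`
induced by its vertex set. -/
def IsInducedPath (G : SimpleGraph V) {x y : V} (P : G.Walk x y) : Prop :=
  P.IsPath ∧ ∀ a b : V, a ∈ P.support → b ∈ P.support → G.Adj a b → P.toSubgraph.Adj a b

/-- A `uv`-trail of `G`: an induced `uv`-path of `G` that is not a shortest
`uv`-path of `G`. -/
def IsTrailPath (G : SimpleGraph V) (u v : V) (P : G.Walk u v) : Prop :=
  IsInducedPath G P ∧ ¬ IsShortestPath G P

/-- A shortest `uv`-trail of `G`: a `uv`-trail of minimum number of edges. -/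
def IsShortestTrail (G : SimpleGraph V) (u v : V) (P : G.Walk u v) : Prop :=
  IsTrailPath G u v P ∧ ∀ Q : G.Walk u v, IsTrailPath G u v Q → P.length ≤ Q.length

/-- `G` is `uv`-straight: every vertex lies on a shortest `uv`-path of `G`. -/
def Straight (G : SimpleGraph V) (u v : V) : Prop :=
  ∀ x : V, ∃ P : G.Walk u v, IsShortestPath G P ∧ x ∈ P.support

/-- Vertex sets `X` and `Y` are anticomplete in `G`: they are disjoint and there
is no edge of `G` between them. -/
def Anticomplete (G : SimpleGraph V) (X Y : Set V) : Prop :=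
  ∀ x ∈ X, ∀ y ∈ Y, x ≠ y ∧ ¬ G.Adj x y

/-- `x` and `y` are connected in the subgraph of `G` induced by `A`. -/
def ConnIn (G : SimpleGraph V) (A : Set V) (x y : V) : Prop :=
  ∃ W : G.Walk x y, ∀ z ∈ W.support, z ∈ A

/-- The closed neighborhood `N_G[A]` of a vertex set `A`. -/
def closedNbhd (G : SimpleGraph V) (A : Set V) : Set V :=
  {y | y ∈ A ∨ ∃ x ∈ A, G.Adj x y}

/-- `(s, t)` is the twist pair of the `uv`-path `P`: `P[u,s]` is the maximal
monotone prefix of `P` and `P[t,v]` is the maximal monotone suffix of `P`. -/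
def IsTwistPair [DecidableEq V] (G : SimpleGraph V) (u v : V) (P : G.Walk u v)
    (s t : V) : Prop :=
  ∃ (hs : s ∈ P.support) (ht : t ∈ P.support),
    MonoWalk G u (P.takeUntil s hs) ∧ MonoWalk G u (P.dropUntil t ht) ∧
    (∀ (s' : V) (hs' : s' ∈ P.support), MonoWalk G u (P.takeUntil s' hs') →
      (P.takeUntil s' hs').length ≤ (P.takeUntil s hs).length) ∧
    (∀ (t' : V) (ht' : t' ∈ P.support), MonoWalk G u (P.dropUntil t' ht') →
      (P.dropUntil t' ht').length ≤ (P.dropUntil t ht).length)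

/-- `(W1, W2)` is a pair of wings for the quadruple `(a, b, c, d)` in `G`
(with respect to heights measured from `u`): `W1` is a monotone `c`-`a*`-path
containing `a`, `W2` is a monotone `b`-`d*`-path containing `d`,
`h(a*) + 1 = h(a) = h(b) ≤ h(c) = h(d) = h(d*) - 1`, `W1 - c` is anticomplete
to `W2`, and `W1` is anticomplete to `W2 - b`. -/
def IsWingPair (G : SimpleGraph V) (u : V) (a b c d : V) {astar dstar : V}
    (W1 : G.Walk c astar) (W2 : G.Walk b dstar) : Prop :=
  W1.IsPath ∧ W2.IsPath ∧ MonoWalk G u W1 ∧ MonoWalk G u W2 ∧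
  a ∈ W1.support ∧ d ∈ W2.support ∧
  G.dist u astar + 1 = G.dist u a ∧ G.dist u a = G.dist u b ∧
  G.dist u b ≤ G.dist u c ∧ G.dist u c = G.dist u d ∧
  G.dist u d + 1 = G.dist u dstar ∧
  Anticomplete G {x | x ∈ W1.support ∧ x ≠ c} {x | x ∈ W2.support} ∧
  Anticomplete G {x | x ∈ W1.support} {x | x ∈ W2.support ∧ x ≠ b}

/-- The quadruple `(a, b, c, d)` is winged in `G`. -/
def Winged (G : SimpleGraph V) (u : V) (a b c d : V) : Prop :=
  ∃ (astar dstar : V) (W1 : G.Walk c astar) (W2 : G.Walk b dstar),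
    IsWingPair G u a b c d W1 W2

/-- The quadruple `(a, b, c, d)` admits a pair of wings `(W1, W2)` in `G` with
`W1` anticomplete to `W2`. -/
def WingedAnti (G : SimpleGraph V) (u : V) (a b c d : V) : Prop :=
  ∃ (astar dstar : V) (W1 : G.Walk c astar) (W2 : G.Walk b dstar),
    IsWingPair G u a b c d W1 W2 ∧
    Anticomplete G {x | x ∈ W1.support} {x | x ∈ W2.support}

/-- For a `uv`-trail `P` of a `uv`-straight graph `G` with twist pair `(s, t)`,
a monotone `uc`-path `S` of `G` with `h(c) = h(s)` is a sidetrack for `P` if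
(S1) `G` contains a monotone `tv`-path `T` with `S - c` anticomplete to `T` and
`S` anticomplete to `T - t`, and (S2) `S` contains the vertex `a` of `P[u,s]`
with `h(a) = h(t)`. -/
def IsSidetrack [DecidableEq V] (G : SimpleGraph V) (u v : V) (P : G.Walk u v)
    (s t : V) {c : V} (S : G.Walk u c) : Prop :=
  S.IsPath ∧ MonoWalk G u S ∧ G.dist u c = G.dist u s ∧
  (∃ (T : G.Walk t v), T.IsPath ∧ MonoWalk G u T ∧
    Anticomplete G {x | x ∈ S.support ∧ x ≠ c} {x | x ∈ T.support} ∧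
    Anticomplete G {x | x ∈ S.support} {x | x ∈ T.support ∧ x ≠ t}) ∧
  (∀ (hs : s ∈ P.support) (a : V),
    a ∈ (P.takeUntil s hs).support → G.dist u a = G.dist u t → a ∈ S.support)

namespace Statement0Aux

variable {G : SimpleGraph V}

/-- An arithmetic fact about ±1-step sequences with distinct values bounded by the last. -/
lemma seq_mono (f : ℕ → ℕ) (L : ℕ)
    (hstep : ∀ i < L, f (i + 1) = f i + 1 ∨ f i = f (i + 1) + 1)
    (hinj : ∀ i ≤ L, ∀ j ≤ L, f i = f j → i = j)
    (hle : ∀ i ≤ L, f i ≤ f L) :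
    ∀ i ≤ L, f i = f 0 + i := by
  classical
  have hup : ∀ i < L, f (i + 1) = f i + 1 := by
    by_contra hcon
    push_neg at hcon
    obtain ⟨i, hiL, hnot⟩ := hcon
    by_cases hex : ∃ j, i ≤ j ∧ j < L ∧ f (j + 1) = f j + 1
    · obtain ⟨hij0, hj0L, hj0up⟩ := Nat.find_spec hex
      set j0 := Nat.find hex with hj0def
      have hne : j0 ≠ i := by
        intro h
        rw [h] at hj0up
        exact hnot hj0up
      have hmin : ¬ (i ≤ j0 - 1 ∧ j0 - 1 < L ∧ f (j0 - 1 + 1) = f (j0 - 1) + 1) :=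
        Nat.find_min hex (by omega)
      have hdownj : f (j0 - 1) = f (j0 - 1 + 1) + 1 := by
        rcases hstep (j0 - 1) (by omega) with h | h
        · exact absurd ⟨by omega, by omega, h⟩ hmin
        · exact h
      have h1 : j0 - 1 + 1 = j0 := by omega
      rw [h1] at hdownj
      have heq : f (j0 - 1) = f (j0 + 1) := by omega
      have := hinj (j0 - 1) (by omega) (j0 + 1) (by omega) heq
      omega
    · push_neg at hex
      have h1 : f (L - 1 + 1) ≠ f (L - 1) + 1 := hex (L - 1) (by omega) (by omega)
      have h2 : f (L - 1) = f (L - 1 + 1) + 1 := (hstep (L - 1) (by omega)).resolve_left h1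
      have h3 : L - 1 + 1 = L := by omega
      rw [h3] at h2
      have := hle (L - 1) (by omega)
      omega
  intro i hi
  induction i with
  | zero => omega
  | succ k ih =>
    have := hup k (by omega)
    have := ih (by omega)
    omega

lemma dist_triangle' {u b w : V} (h1 : G.Reachable u b) (h2 : G.Reachable b w) :
    G.dist u w ≤ G.dist u b + G.dist b w := by
  obtain ⟨p, hp⟩ := h1.exists_walk_length_eq_dist
  obtain ⟨q, hq⟩ := h2.exists_walk_length_eq_dist
  calc G.dist u w ≤ (p.append q).length := SimpleGraph.dist_le _
  _ = _ := by rw [Walk.length_append, hp, hq]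

lemma dist_le_of_adj' {u a b : V} (hr : G.Reachable u a) (hab : G.Adj a b) :
    G.dist u b ≤ G.dist u a + 1 := by
  have h2 : G.dist a b ≤ 1 := by
    simpa using SimpleGraph.dist_le (Walk.cons hab Walk.nil)
  have := dist_triangle' hr hab.reachable
  omega

lemma dist_getVert_le {u a c : V} (W : G.Walk a c) (hr : G.Reachable u a) (i : ℕ) :
    G.dist u (W.getVert i) ≤ G.dist u a + i := by
  induction W generalizing i with
  | nil =>
    rw [Walk.getVert_of_length_le _ (by simp only [Walk.length_nil, Nat.zero_le] : Walk.nil.length ≤ i)]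
    omega
  | @cons a b c h q ih =>
    cases i with
    | zero => simp [Walk.getVert_zero]
    | succ i =>
      rw [Walk.getVert_cons_succ]
      have := ih (hr.trans h.reachable) i
      have := dist_le_of_adj' hr h
      omega

lemma dist_getVert_to_end_le {a c : V} (W : G.Walk a c) (i : ℕ) :
    G.dist (W.getVert i) c ≤ W.length - i := by
  induction W generalizing i with
  | nil =>
    rw [Walk.getVert_of_length_le _ (by simp only [Walk.length_nil, Nat.zero_le] : Walk.nil.length ≤ i)]
    simp [SimpleGraph.dist_self]
  | @cons a b c h q ih =>
    cases i with
    | zero =>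
      simpa using SimpleGraph.dist_le (Walk.cons h q)
    | succ i =>
      rw [Walk.getVert_cons_succ]
      have := ih i
      simpa [Walk.length_cons] using this

lemma support_eq_map_getVert {a c : V} (W : G.Walk a c) :
    W.support = (List.range (W.length + 1)).map W.getVert := by
  induction W with
  | nil => simp [Walk.getVert]
  | @cons a b c h q ih =>
    rw [Walk.support_cons, ih, Walk.length_cons]
    conv_rhs => rw [List.range_succ_eq_map, List.map_cons, List.map_map]
    refine congrArg₂ List.cons (Walk.getVert_zero _).symm ?_
    exact List.map_congr_left fun n _ => (Walk.getVert_cons_succ _ _).symm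

lemma path_getVert_inj {a c : V} {W : G.Walk a c} (hW : W.IsPath) {i j : ℕ}
    (hi : i ≤ W.length) (hj : j ≤ W.length) (h : W.getVert i = W.getVert j) : i = j := by
  have hnd := hW.support_nodup
  rw [support_eq_map_getVert] at hnd
  have hinj := List.inj_on_of_nodup_map hnd
  exact hinj (by simp; omega) (by simp; omega) h


lemma mem_support_of_getVert {a c : V} {W : G.Walk a c} {i : ℕ} (hi : i ≤ W.length) :
    W.getVert i ∈ W.support :=
  Walk.mem_support_iff_exists_getVert.mpr ⟨i, rfl, hi⟩

lemma reachable_getVert {u a c : V} (W : G.Walk a c) (hr : G.Reachable u a) (i : ℕ) :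
    G.Reachable u (W.getVert i) := by
  induction W generalizing i with
  | nil =>
    rw [Walk.getVert_of_length_le _ (by simp only [Walk.length_nil, Nat.zero_le] :
      Walk.nil.length ≤ i)]
    exact hr
  | @cons a b c h q ih =>
    cases i with
    | zero => simpa using hr
    | succ i =>
      rw [Walk.getVert_cons_succ]
      exact ih (hr.trans h.reachable) i

lemma shortest_getVert_dist {u c : V} (W : G.Walk u c) (hW : W.length = G.dist u c)
    {i : ℕ} (hi : i ≤ W.length) : G.dist u (W.getVert i) = i := by
  have h1 : G.dist u (W.getVert i) ≤ i := by
    simpa [SimpleGraph.dist_self] using dist_getVert_le W (G := G) (Reachable.refl u) i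
  have h2 : G.dist (W.getVert i) c ≤ W.length - i := dist_getVert_to_end_le W i
  have hr1 : G.Reachable u (W.getVert i) := reachable_getVert W (Reachable.refl u) i
  have hr2 : G.Reachable (W.getVert i) c := by
    have hrev := reachable_getVert W.reverse (Reachable.refl c) (W.length - i)
    rw [Walk.getVert_reverse] at hrev
    have hii : W.length - (W.length - i) = i := by omega
    rw [hii] at hrev
    exact hrev.symm
  have h3 : G.dist u c ≤ G.dist u (W.getVert i) + G.dist (W.getVert i) c :=
    dist_triangle' hr1 hr2
  omega


section DecEq
variable [DecidableEq V]

lemma length_take_add_drop {a c w : V} (W : G.Walk a c) (h : w ∈ W.support) :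
    (W.takeUntil w h).length + (W.dropUntil w h).length = W.length := by
  conv_rhs => rw [← Walk.take_spec W h]
  rw [Walk.length_append]

lemma getVert_takeUntil {a c w : V} (W : G.Walk a c) (h : w ∈ W.support) {i : ℕ}
    (hi : i ≤ (W.takeUntil w h).length) : (W.takeUntil w h).getVert i = W.getVert i := by
  conv_rhs => rw [← Walk.take_spec W h]
  rw [Walk.getVert_append]
  split_ifs with hlt
  · rfl
  · have hieq : i = (W.takeUntil w h).length := by omega
    subst hieq
    rw [Nat.sub_self, Walk.getVert_zero, Walk.getVert_length]

lemma getVert_dropUntil {a c w : V} (W : G.Walk a c) (h : w ∈ W.support) (j : ℕ) :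
    (W.dropUntil w h).getVert j = W.getVert ((W.takeUntil w h).length + j) := by
  have hg := Walk.getVert_append (W.takeUntil w h) (W.dropUntil w h)
    ((W.takeUntil w h).length + j)
  rw [Walk.take_spec W h] at hg
  rw [hg, if_neg (by omega)]
  congr 1
  omega

lemma length_takeUntil_eq {a c w : V} {W : G.Walk a c} (hW : W.IsPath) {m : ℕ}
    (hm : m ≤ W.length) (hw : W.getVert m = w) (h : w ∈ W.support) :
    (W.takeUntil w h).length = m := by
  apply path_getVert_inj hW (Walk.length_takeUntil_le W h) hm
  rw [← getVert_takeUntil W h (le_refl _), Walk.getVert_length, hw]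

end DecEq

lemma monoWalk_iff {u a c : V} (W : G.Walk a c) :
    MonoWalk G u W ↔ ∀ i ≤ W.length, ∀ j ≤ W.length,
      G.dist u (W.getVert i) = G.dist u (W.getVert j) → i = j := by
  rw [MonoWalk, support_eq_map_getVert, List.map_map]
  constructor
  · intro hnd i hi j hj hij
    have hinj := List.inj_on_of_nodup_map hnd
    exact hinj (by simp; omega) (by simp; omega) hij
  · intro hinj
    rw [List.nodup_map_iff_inj_on List.nodup_range]
    intro i hi j hj hij
    simp only [List.mem_range] at hi hj
    exact hinj i (by omega) j (by omega) hij

lemma monoWalk_from_u {u c : V} {W : G.Walk u c} (hW : MonoWalk G u W) :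
    ∀ i, i ≤ W.length → G.dist u (W.getVert i) = i := by
  intro i
  induction i using Nat.strong_induction_on with
  | _ i IH =>
    intro hi
    cases i with
    | zero => simp [SimpleGraph.dist_self]
    | succ k =>
      have hk : G.dist u (W.getVert k) = k := IH k (by omega) (by omega)
      have hadj := W.adj_getVert_succ (by omega : k < W.length)
      have hr : G.Reachable u (W.getVert k) := reachable_getVert W (Reachable.refl u) k
      have h1 : G.dist u (W.getVert (k + 1)) ≤ k + 1 := by
        have := dist_le_of_adj' hr hadj
        omega
      by_cases hdk : G.dist u (W.getVert (k + 1)) ≤ k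
      · exfalso
        have hdd : G.dist u (W.getVert (G.dist u (W.getVert (k + 1)))) =
            G.dist u (W.getVert (k + 1)) := IH _ (by omega) (by omega)
        have := (monoWalk_iff W).mp hW _ (by omega) (k + 1) (by omega) hdd
        omega
      · omega

lemma monoWalk_of_affine {u a c : V} {W : G.Walk a c} {k : ℕ}
    (haff : ∀ i ≤ W.length, G.dist u (W.getVert i) = k + i) : MonoWalk G u W :=
  (monoWalk_iff W).mpr fun i hi j hj h => by
    rw [haff i hi, haff j hj] at h
    omega

lemma monoWalk_to_v {u t w : V} {W : G.Walk t w} (hW : MonoWalk G u W)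
    (hrt : G.Reachable u t) (hball : ∀ z, G.dist u z ≤ G.dist u w) :
    ∀ i ≤ W.length, G.dist u (W.getVert i) = G.dist u t + i := by
  have hru : ∀ i, G.Reachable u (W.getVert i) := fun i => reachable_getVert W hrt i
  have hres := seq_mono (fun i => G.dist u (W.getVert i)) W.length ?_ ?_ ?_
  · intro i hi
    have := hres i hi
    simpa [Walk.getVert_zero] using this
  · intro i hiL
    have hadj := W.adj_getVert_succ hiL
    have h1 := dist_le_of_adj' (hru i) hadj
    have h2 := dist_le_of_adj' (hru (i + 1)) hadj.symm
    have h3 := (monoWalk_iff W).mp hW i (by omega) (i + 1) (by omega)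
    by_cases heq : G.dist u (W.getVert i) = G.dist u (W.getVert (i + 1))
    · exact absurd (h3 heq) (by omega)
    · omega
  · intro i hi j hj h
    exact (monoWalk_iff W).mp hW i hi j hj h
  · intro i hi
    simpa [Walk.getVert_length] using hball (W.getVert i)

lemma induced_adj_consec {a0 c : V} {W : G.Walk a0 c} (hW : IsInducedPath G W)
    {x y : V} {i j : ℕ} (hi : i ≤ W.length) (hj : j ≤ W.length)
    (hgi : W.getVert i = x) (hgj : W.getVert j = y) (hadj : G.Adj x y) :
    j = i + 1 ∨ i = j + 1 := by
  have hsub : W.toSubgraph.Adj x y :=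
    hW.2 x y (hgi ▸ mem_support_of_getVert hi) (hgj ▸ mem_support_of_getVert hj) hadj
  obtain ⟨k, hk, hkl⟩ := (Walk.toSubgraph_adj_iff W).mp hsub
  rw [Sym2.eq_iff] at hk
  rcases hk with ⟨h1, h2⟩ | ⟨h1, h2⟩
  · have hki : k = i := path_getVert_inj hW.1 (by omega) hi (by rw [h1, hgi])
    have hkj : k + 1 = j := path_getVert_inj hW.1 (by omega) hj (by rw [h2, hgj])
    omega
  · have hki : k = j := path_getVert_inj hW.1 (by omega) hj (by rw [h1, hgj])
    have hkj : k + 1 = i := path_getVert_inj hW.1 (by omega) hi (by rw [h2, hgi])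
    omega

lemma isInducedPath_of_shortest {u c : V} (W : G.Walk u c)
    (hW : W.length = G.dist u c) : IsInducedPath G W := by
  refine ⟨W.isPath_of_length_eq_dist hW, ?_⟩
  intro a b ha hb hadj
  obtain ⟨i, hgi, hile⟩ := Walk.mem_support_iff_exists_getVert.mp ha
  obtain ⟨j, hgj, hjle⟩ := Walk.mem_support_iff_exists_getVert.mp hb
  have fa : G.dist u (W.getVert i) = i := shortest_getVert_dist W hW hile
  have fb : G.dist u (W.getVert j) = j := shortest_getVert_dist W hW hjle
  have hne : i ≠ j := by
    intro h
    rw [h, hgj] at hgi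
    exact hadj.ne hgi.symm
  have h1 : G.dist u b ≤ G.dist u a + 1 :=
    dist_le_of_adj' (hgi ▸ reachable_getVert W (Reachable.refl u) i) hadj
  have h2 : G.dist u a ≤ G.dist u b + 1 :=
    dist_le_of_adj' (hgj ▸ reachable_getVert W (Reachable.refl u) j) hadj.symm
  rw [← hgi, ← hgj, fa, fb] at h1 h2
  rcases (by omega : j = i + 1 ∨ i = j + 1) with h | h
  · subst h
    have := W.toSubgraph_adj_getVert (by omega : i < W.length)
    rwa [hgi, hgj] at this
  · subst h
    have := W.toSubgraph_adj_getVert (by omega : j < W.length)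
    rw [hgi, hgj] at this
    exact this.symm

section DecEq2
variable [DecidableEq V]

lemma isInducedPath_takeUntil {a0 c w : V} {W : G.Walk a0 c}
    (hW : IsInducedPath G W) (h : w ∈ W.support) : IsInducedPath G (W.takeUntil w h) := by
  refine ⟨hW.1.takeUntil h, ?_⟩
  intro a b ha hb hadj
  obtain ⟨i, hgi, hile⟩ := Walk.mem_support_iff_exists_getVert.mp ha
  obtain ⟨j, hgj, hjle⟩ := Walk.mem_support_iff_exists_getVert.mp hb
  rw [getVert_takeUntil W h hile] at hgi
  rw [getVert_takeUntil W h hjle] at hgj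
  have hiW : i ≤ W.length := le_trans hile (Walk.length_takeUntil_le W h)
  have hjW : j ≤ W.length := le_trans hjle (Walk.length_takeUntil_le W h)
  rcases induced_adj_consec hW hiW hjW hgi hgj hadj with hc | hc
  · subst hc
    have hsub := (W.takeUntil w h).toSubgraph_adj_getVert (by omega : i < (W.takeUntil w h).length)
    rw [getVert_takeUntil W h (by omega), getVert_takeUntil W h (by omega), hgi, hgj] at hsub
    exact hsub
  · subst hc
    have hsub := (W.takeUntil w h).toSubgraph_adj_getVert (by omega : j < (W.takeUntil w h).length)
    rw [getVert_takeUntil W h (by omega), getVert_takeUntil W h (by omega), hgi, hgj] at hsub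
    exact hsub.symm

lemma isInducedPath_dropUntil {a0 c w : V} {W : G.Walk a0 c}
    (hW : IsInducedPath G W) (h : w ∈ W.support) : IsInducedPath G (W.dropUntil w h) := by
  refine ⟨hW.1.dropUntil h, ?_⟩
  intro a b ha hb hadj
  obtain ⟨i, hgi, hile⟩ := Walk.mem_support_iff_exists_getVert.mp ha
  obtain ⟨j, hgj, hjle⟩ := Walk.mem_support_iff_exists_getVert.mp hb
  rw [getVert_dropUntil W h i] at hgi
  rw [getVert_dropUntil W h j] at hgj
  have hlen := length_take_add_drop W h
  set L := (W.takeUntil w h).length with hL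
  have hiW : L + i ≤ W.length := by omega
  have hjW : L + j ≤ W.length := by omega
  rcases induced_adj_consec hW hiW hjW hgi hgj hadj with hc | hc
  · have hji : j = i + 1 := by omega
    subst hji
    have hsub := (W.dropUntil w h).toSubgraph_adj_getVert (by omega : i < (W.dropUntil w h).length)
    rw [getVert_dropUntil W h, getVert_dropUntil W h, ← hL] at hsub
    rw [hgi] at hsub
    rw [hgj] at hsub
    exact hsub
  · have hij : i = j + 1 := by omega
    subst hij
    have hsub := (W.dropUntil w h).toSubgraph_adj_getVert (by omega : j < (W.dropUntil w h).length)
    rw [getVert_dropUntil W h, getVert_dropUntil W h, ← hL] at hsub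
    rw [hgj] at hsub
    rw [hgi] at hsub
    exact hsub.symm

end DecEq2

section Shortcut
variable [DecidableEq V]

lemma shortcut {u a b v : V} (A : G.Walk u a) (B : G.Walk b v)
    (hA : IsInducedPath G A) (hB : IsInducedPath G B)
    (htouch : ∃ p ∈ A.support, ∃ q ∈ B.support, p = q ∨ G.Adj p q) :
    ∃ (z y : V) (hz : z ∈ A.support) (hy : y ∈ B.support) (R : G.Walk u v),
      IsInducedPath G R ∧
      (∀ i ≤ (A.takeUntil z hz).length, R.getVert i = A.getVert i) ∧
      (∀ j ≤ (B.dropUntil y hy).length,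
        R.getVert (R.length - (B.dropUntil y hy).length + j) = (B.dropUntil y hy).getVert j) ∧
      ((z = y ∧ R.length = (A.takeUntil z hz).length + (B.dropUntil y hy).length) ∨
       (G.Adj z y ∧
         R.length = (A.takeUntil z hz).length + 1 + (B.dropUntil y hy).length)) := by
  classical
  obtain ⟨p0, hp0, q0, hq0, hpq0⟩ := htouch
  obtain ⟨m0, hm0eq, hm0le⟩ := Walk.mem_support_iff_exists_getVert.mp hp0
  have hex1 : ∃ m, m ≤ A.length ∧ ∃ q ∈ B.support, A.getVert m = q ∨ G.Adj (A.getVert m) q :=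
    ⟨m0, hm0le, q0, hq0, hm0eq ▸ hpq0⟩
  obtain ⟨hmle, q1, hq1, hzq1⟩ := Nat.find_spec hex1
  set m := Nat.find hex1 with hmdef
  set z := A.getVert m with hzdef
  have hz : z ∈ A.support := mem_support_of_getVert hmle
  have hzmin : ∀ i < m, ∀ q ∈ B.support, A.getVert i ≠ q ∧ ¬ G.Adj (A.getVert i) q := by
    intro i him q hqB
    have hni := Nat.find_min hex1 him
    push_neg at hni
    exact hni (by omega) q hqB
  obtain ⟨m1, hm1eq, hm1le⟩ := Walk.mem_support_iff_exists_getVert.mp hq1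
  have hex2 : ∃ k, k ≤ B.length ∧
      (z = B.getVert (B.length - k) ∨ G.Adj z (B.getVert (B.length - k))) := by
    refine ⟨B.length - m1, by omega, ?_⟩
    rw [(by omega : B.length - (B.length - m1) = m1), hm1eq]
    exact hzq1
  obtain ⟨hkle, hzk⟩ := Nat.find_spec hex2
  set k0 := Nat.find hex2 with hk0def
  set m' := B.length - k0 with hm'def
  set y := B.getVert m' with hydef
  have hm'le : m' ≤ B.length := by omega
  have hy : y ∈ B.support := mem_support_of_getVert hm'le
  have hymax : ∀ j, m' < j → j ≤ B.length → z ≠ B.getVert j ∧ ¬ G.Adj z (B.getVert j) := by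
    intro j hj1 hj2
    have hklt : B.length - j < k0 := by omega
    have hni := Nat.find_min hex2 hklt
    push_neg at hni
    have hres := hni (by omega)
    rwa [(by omega : B.length - (B.length - j) = j)] at hres
  have hzy0 : z = y ∨ G.Adj z y := hzk
  have hLtk : (A.takeUntil z hz).length = m := length_takeUntil_eq hA.1 hmle hzdef.symm hz
  have hBtk : (B.takeUntil y hy).length = m' := length_takeUntil_eq hB.1 hm'le hydef.symm hy
  have hBsplit := length_take_add_drop B hy
  have hAsplit := length_take_add_drop A hz
  have hTK : ∀ w ∈ (A.takeUntil z hz).support, w = z ∨ ∀ q ∈ B.support, w ≠ q ∧ ¬ G.Adj w q := by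
    intro w hw
    obtain ⟨i, hieq, hile⟩ := Walk.mem_support_iff_exists_getVert.mp hw
    rw [getVert_takeUntil A hz hile] at hieq
    by_cases hiM : i = m
    · left
      rw [← hieq, hiM, ← hzdef]
    · right
      intro q hqB
      rw [← hieq]
      exact hzmin i (by omega) q hqB
  have hDR : ∀ w ∈ (B.dropUntil y hy).support, w = y ∨ (z ≠ w ∧ ¬ G.Adj z w) := by
    intro w hw
    obtain ⟨j, hjeq, hjle⟩ := Walk.mem_support_iff_exists_getVert.mp hw
    rw [getVert_dropUntil B hy j, hBtk] at hjeq
    by_cases hj0 : j = 0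
    · left
      rw [← hjeq, hj0, Nat.add_zero, ← hydef]
    · right
      have hres := hymax (m' + j) (by omega) (by omega)
      rwa [hjeq] at hres
  -- positions of elements of the two pieces inside A and B
  have hposA : ∀ w ∈ (A.takeUntil z hz).support, ∃ i ≤ m, A.getVert i = w := by
    intro w hw
    obtain ⟨i, hieq, hile⟩ := Walk.mem_support_iff_exists_getVert.mp hw
    rw [getVert_takeUntil A hz hile] at hieq
    exact ⟨i, by omega, hieq⟩
  have hposB : ∀ w ∈ (B.dropUntil y hy).support,
      ∃ j, m' + j ≤ B.length ∧ j ≤ (B.dropUntil y hy).length ∧ B.getVert (m' + j) = w := by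
    intro w hw
    obtain ⟨j, hjeq, hjle⟩ := Walk.mem_support_iff_exists_getVert.mp hw
    rw [getVert_dropUntil B hy j, hBtk] at hjeq
    exact ⟨j, by omega, hjle, hjeq⟩
  have hAgm : A.getVert ((A.takeUntil z hz).length) = z := by rw [hLtk, ← hzdef]
  -- we no longer need the defining equations of the chosen objects
  clear_value k0 m'
  clear hzk hkle hzmin hymax hm0eq hm0le hm1eq hm1le hk0def hm'def hpq0 hp0 hq0 hq1 hzq1
  clear_value m z y
  rcases hzy0 with hzy | hadjzy
  · -- z = y : concatenate at the common vertex
    subst hzy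
    refine ⟨z, z, hz, hy, (A.takeUntil z hz).append (B.dropUntil z hy), ?_⟩
    have hRlen : ((A.takeUntil z hz).append (B.dropUntil z hy)).length =
        (A.takeUntil z hz).length + (B.dropUntil z hy).length := Walk.length_append _ _
    have hpre : ∀ i ≤ (A.takeUntil z hz).length,
        ((A.takeUntil z hz).append (B.dropUntil z hy)).getVert i = A.getVert i := by
      intro i hi
      rw [Walk.getVert_append]
      split_ifs with hlt
      · exact getVert_takeUntil A hz (by omega)
      · rw [(by omega : i - (A.takeUntil z hz).length = 0), Walk.getVert_zero,
          (by omega : i = (A.takeUntil z hz).length), hAgm]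
    have hsuf : ∀ j ≤ (B.dropUntil z hy).length,
        ((A.takeUntil z hz).append (B.dropUntil z hy)).getVert
          (((A.takeUntil z hz).append (B.dropUntil z hy)).length - (B.dropUntil z hy).length + j)
          = (B.dropUntil z hy).getVert j := by
      intro j hj
      rw [hRlen, (by omega : (A.takeUntil z hz).length + (B.dropUntil z hy).length -
        (B.dropUntil z hy).length + j = (A.takeUntil z hz).length + j), Walk.getVert_append,
        if_neg (by omega)]
      congr 1
      omega
    have hdrnodup := (hB.1.dropUntil hy).support_nodup
    have hmem : ∀ w ∈ ((A.takeUntil z hz).append (B.dropUntil z hy)).support,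
        w ∈ (A.takeUntil z hz).support ∨ w ∈ (B.dropUntil z hy).support := by
      intro w hw
      rw [Walk.mem_support_append_iff] at hw
      exact hw
    have hpath : ((A.takeUntil z hz).append (B.dropUntil z hy)).IsPath := by
      rw [Walk.isPath_def, Walk.support_append, List.nodup_append]
      refine ⟨(hA.1.takeUntil hz).support_nodup, ?_, ?_⟩
      · rw [Walk.support_eq_cons] at hdrnodup
        exact (List.nodup_cons.mp hdrnodup).2
      · intro w hw1 x hw2 hwx
        rw [← hwx] at hw2
        have hwnz : w ≠ z := by
          intro he
          subst he
          rw [Walk.support_eq_cons] at hdrnodup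
          exact (List.nodup_cons.mp hdrnodup).1 hw2
        have hw2' : w ∈ (B.dropUntil z hy).support := by
          rw [Walk.support_eq_cons]
          exact List.mem_cons_of_mem _ hw2
        rcases hTK w hw1 with h | h
        · exact hwnz h
        · exact (h w (Walk.support_dropUntil_subset B hy hw2')).1 rfl
    refine ⟨⟨hpath, ?_⟩, hpre, hsuf, Or.inl ⟨rfl, hRlen⟩⟩
    intro p q hp hq hadj
    rcases hmem p hp with hptk | hpdr
    · rcases hmem q hq with hqtk | hqdr
      · -- both in the prefix
        obtain ⟨i, hi, hieq⟩ := hposA p hptk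
        obtain ⟨j, hj, hjeq⟩ := hposA q hqtk
        rcases induced_adj_consec hA (by omega) (by omega) hieq hjeq hadj with hc | hc
        · have hsub := ((A.takeUntil z hz).append (B.dropUntil z hy)).toSubgraph_adj_getVert
            (i := i) (by omega)
          rwa [hpre i (by omega), hpre (i + 1) (by omega), hieq, ← hc, hjeq] at hsub
        · have hsub := ((A.takeUntil z hz).append (B.dropUntil z hy)).toSubgraph_adj_getVert
            (i := j) (by omega)
          rw [hpre j (by omega), hpre (j + 1) (by omega), hjeq, ← hc, hieq] at hsub
          exact hsub.symm
      · -- cross : impossible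
        exfalso
        rcases hTK p hptk with hpz | hfar
        · subst hpz
          rcases hDR q hqdr with hqy | ⟨_, hnadj⟩
          · subst hqy
            exact hadj.ne rfl
          · exact hnadj hadj
        · exact (hfar q (Walk.support_dropUntil_subset B hy hqdr)).2 hadj
    · rcases hmem q hq with hqtk | hqdr
      · -- cross, symmetric
        exfalso
        rcases hTK q hqtk with hqz | hfar
        · subst hqz
          rcases hDR p hpdr with hpy | ⟨_, hnadj⟩
          · subst hpy
            exact hadj.ne rfl
          · exact hnadj hadj.symm
        · exact (hfar p (Walk.support_dropUntil_subset B hy hpdr)).2 hadj.symm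
      · -- both in the suffix
        obtain ⟨i, hi, hile, hieq⟩ := hposB p hpdr
        obtain ⟨j, hj, hjle, hjeq⟩ := hposB q hqdr
        rcases induced_adj_consec hB hi hj hieq hjeq hadj with hc | hc
        · have hji : j = i + 1 := by omega
          subst hji
          have hsub := ((A.takeUntil z hz).append (B.dropUntil z hy)).toSubgraph_adj_getVert
            (i := (A.takeUntil z hz).length + i) (by omega)
          have e1 := hsuf i (by omega)
          have e2 := hsuf (i + 1) (by omega)
          rw [hRlen, (by omega : (A.takeUntil z hz).length + (B.dropUntil z hy).length -
            (B.dropUntil z hy).length + i = (A.takeUntil z hz).length + i)] at e1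
          rw [hRlen, (by omega : (A.takeUntil z hz).length + (B.dropUntil z hy).length -
            (B.dropUntil z hy).length + (i + 1) = (A.takeUntil z hz).length + i + 1)] at e2
          rw [e1, e2, getVert_dropUntil B hy, getVert_dropUntil B hy, hBtk, hieq, hjeq] at hsub
          exact hsub
        · have hij : i = j + 1 := by omega
          subst hij
          have hsub := ((A.takeUntil z hz).append (B.dropUntil z hy)).toSubgraph_adj_getVert
            (i := (A.takeUntil z hz).length + j) (by omega)
          have e1 := hsuf j (by omega)
          have e2 := hsuf (j + 1) (by omega)
          rw [hRlen, (by omega : (A.takeUntil z hz).length + (B.dropUntil z hy).length -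
            (B.dropUntil z hy).length + j = (A.takeUntil z hz).length + j)] at e1
          rw [hRlen, (by omega : (A.takeUntil z hz).length + (B.dropUntil z hy).length -
            (B.dropUntil z hy).length + (j + 1) = (A.takeUntil z hz).length + j + 1)] at e2
          rw [e1, e2, getVert_dropUntil B hy, getVert_dropUntil B hy, hBtk, hjeq, hieq] at hsub
          exact hsub.symm
  · -- z ≠ y (or rather: the adjacent case)
    refine ⟨z, y, hz, hy, (A.takeUntil z hz).append (Walk.cons hadjzy (B.dropUntil y hy)),
      ?_⟩
    have hRlen : ((A.takeUntil z hz).append (Walk.cons hadjzy (B.dropUntil y hy))).length =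
        (A.takeUntil z hz).length + 1 + (B.dropUntil y hy).length := by
      rw [Walk.length_append, Walk.length_cons]
      omega
    have hpre : ∀ i ≤ (A.takeUntil z hz).length,
        ((A.takeUntil z hz).append (Walk.cons hadjzy (B.dropUntil y hy))).getVert i
          = A.getVert i := by
      intro i hi
      rw [Walk.getVert_append]
      split_ifs with hlt
      · exact getVert_takeUntil A hz (by omega)
      · rw [(by omega : i - (A.takeUntil z hz).length = 0), Walk.getVert_zero,
          (by omega : i = (A.takeUntil z hz).length), hAgm]
    have hsuf : ∀ j ≤ (B.dropUntil y hy).length,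
        ((A.takeUntil z hz).append (Walk.cons hadjzy (B.dropUntil y hy))).getVert
          (((A.takeUntil z hz).append (Walk.cons hadjzy (B.dropUntil y hy))).length
            - (B.dropUntil y hy).length + j)
          = (B.dropUntil y hy).getVert j := by
      intro j hj
      rw [hRlen, (by omega : (A.takeUntil z hz).length + 1 + (B.dropUntil y hy).length -
        (B.dropUntil y hy).length + j = (A.takeUntil z hz).length + (j + 1)),
        Walk.getVert_append, if_neg (by omega),
        (by omega : (A.takeUntil z hz).length + (j + 1) - (A.takeUntil z hz).length = j + 1),
        Walk.getVert_cons_succ]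
    have hznotdr : z ∉ (B.dropUntil y hy).support := by
      intro hzdr
      rcases hDR z hzdr with h | h
      · exact hadjzy.ne h
      · exact h.1 rfl
    have hmem : ∀ w ∈ ((A.takeUntil z hz).append (Walk.cons hadjzy (B.dropUntil y hy))).support,
        w ∈ (A.takeUntil z hz).support ∨ w ∈ (B.dropUntil y hy).support := by
      intro w hw
      rw [Walk.mem_support_append_iff] at hw
      rcases hw with h | h
      · exact Or.inl h
      · rw [Walk.support_cons] at h
        rcases List.mem_cons.mp h with h | h
        · subst h
          exact Or.inl (Walk.end_mem_support _)
        · exact Or.inr h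
    have hpath : ((A.takeUntil z hz).append (Walk.cons hadjzy (B.dropUntil y hy))).IsPath := by
      rw [Walk.isPath_def, Walk.support_append, List.nodup_append]
      refine ⟨(hA.1.takeUntil hz).support_nodup, ?_, ?_⟩
      · rw [Walk.support_cons, List.tail_cons]
        exact (hB.1.dropUntil hy).support_nodup
      · intro w hw1 x hw2 hwx
        rw [← hwx] at hw2
        rw [Walk.support_cons, List.tail_cons] at hw2
        rcases hTK w hw1 with h | h
        · subst h
          exact hznotdr hw2
        · exact (h w (Walk.support_dropUntil_subset B hy hw2)).1 rfl
    refine ⟨⟨hpath, ?_⟩, hpre, hsuf, Or.inr ⟨hadjzy, hRlen⟩⟩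
    intro p q hp hq hadj
    have hcross : ∀ p' q', p' ∈ (A.takeUntil z hz).support →
        q' ∈ (B.dropUntil y hy).support → G.Adj p' q' →
        ((A.takeUntil z hz).append (Walk.cons hadjzy (B.dropUntil y hy))).toSubgraph.Adj p' q' := by
      intro p' q' hp' hq' hadj'
      rcases hTK p' hp' with hpz | hfar
      · rcases hDR q' hq' with hqy | ⟨hne, hnadj⟩
        · rw [hpz, hqy]
          have hsub := ((A.takeUntil z hz).append
            (Walk.cons hadjzy (B.dropUntil y hy))).toSubgraph_adj_getVert
            (i := (A.takeUntil z hz).length) (by omega)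
          have e1 := hpre (A.takeUntil z hz).length (le_refl _)
          have e2 := hsuf 0 (by omega)
          rw [hRlen, (by omega : (A.takeUntil z hz).length + 1 + (B.dropUntil y hy).length -
            (B.dropUntil y hy).length + 0 = (A.takeUntil z hz).length + 1)] at e2
          rw [e1, hAgm, e2, Walk.getVert_zero] at hsub
          exact hsub
        · rw [hpz] at hadj'
          exact absurd hadj' hnadj
      · exact absurd hadj' ((hfar q' (Walk.support_dropUntil_subset B hy hq')).2)
    rcases hmem p hp with hptk | hpdr
    · rcases hmem q hq with hqtk | hqdr
      · obtain ⟨i, hi, hieq⟩ := hposA p hptk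
        obtain ⟨j, hj, hjeq⟩ := hposA q hqtk
        rcases induced_adj_consec hA (by omega) (by omega) hieq hjeq hadj with hc | hc
        · have hsub := ((A.takeUntil z hz).append
            (Walk.cons hadjzy (B.dropUntil y hy))).toSubgraph_adj_getVert (i := i) (by omega)
          rwa [hpre i (by omega), hpre (i + 1) (by omega), hieq, ← hc, hjeq] at hsub
        · have hsub := ((A.takeUntil z hz).append
            (Walk.cons hadjzy (B.dropUntil y hy))).toSubgraph_adj_getVert (i := j) (by omega)
          rw [hpre j (by omega), hpre (j + 1) (by omega), hjeq, ← hc, hieq] at hsub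
          exact hsub.symm
      · exact hcross p q hptk hqdr hadj
    · rcases hmem q hq with hqtk | hqdr
      · exact (hcross q p hqtk hpdr hadj.symm).symm
      · obtain ⟨i, hi, hile, hieq⟩ := hposB p hpdr
        obtain ⟨j, hj, hjle, hjeq⟩ := hposB q hqdr
        rcases induced_adj_consec hB hi hj hieq hjeq hadj with hc | hc
        · have hji : j = i + 1 := by omega
          subst hji
          have hsub := ((A.takeUntil z hz).append
            (Walk.cons hadjzy (B.dropUntil y hy))).toSubgraph_adj_getVert
            (i := (A.takeUntil z hz).length + 1 + i) (by omega)
          have e1 := hsuf i (by omega)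
          have e2 := hsuf (i + 1) (by omega)
          rw [hRlen, (by omega : (A.takeUntil z hz).length + 1 + (B.dropUntil y hy).length -
            (B.dropUntil y hy).length + i = (A.takeUntil z hz).length + 1 + i)] at e1
          rw [hRlen, (by omega : (A.takeUntil z hz).length + 1 + (B.dropUntil y hy).length -
            (B.dropUntil y hy).length + (i + 1) = (A.takeUntil z hz).length + 1 + i + 1)] at e2
          rw [e1, e2, getVert_dropUntil B hy, getVert_dropUntil B hy, hBtk, hieq, hjeq] at hsub
          exact hsub
        · have hij : i = j + 1 := by omega
          subst hij
          have hsub := ((A.takeUntil z hz).append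
            (Walk.cons hadjzy (B.dropUntil y hy))).toSubgraph_adj_getVert
            (i := (A.takeUntil z hz).length + 1 + j) (by omega)
          have e1 := hsuf j (by omega)
          have e2 := hsuf (j + 1) (by omega)
          rw [hRlen, (by omega : (A.takeUntil z hz).length + 1 + (B.dropUntil y hy).length -
            (B.dropUntil y hy).length + j = (A.takeUntil z hz).length + 1 + j)] at e1
          rw [hRlen, (by omega : (A.takeUntil z hz).length + 1 + (B.dropUntil y hy).length -
            (B.dropUntil y hy).length + (j + 1) = (A.takeUntil z hz).length + 1 + j + 1)] at e2
          rw [e1, e2, getVert_dropUntil B hy, getVert_dropUntil B hy, hBtk, hjeq, hieq] at hsub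
          exact hsub.symm

end Shortcut

section Cases
variable [DecidableEq V] {u v s t x : V} {P : G.Walk u v}

lemma ubCaseI (hPind : IsInducedPath G P)
    (hsP : s ∈ P.support) (htP : t ∈ P.support)
    (hmono_t : MonoWalk G u (P.dropUntil t htP))
    (hmax_t : ∀ t' (ht' : t' ∈ P.support), MonoWalk G u (P.dropUntil t' ht') →
      (P.dropUntil t' ht').length ≤ (P.dropUntil t htP).length)
    (hreach : ∀ w, G.Reachable u w) (hball : ∀ w, G.dist u w ≤ G.dist u v)
    (hpspt : (P.takeUntil s hsP).length < (P.takeUntil t htP).length)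
    (hft : G.dist u s < G.dist u t)
    (hpred : G.dist u (P.getVert ((P.takeUntil t htP).length - 1)) ≤ G.dist u s) : False := by
  set pt := (P.takeUntil t htP).length with hpt
  have hsplit_t := length_take_add_drop P htP
  have hFt := monoWalk_to_v hmono_t (hreach t) hball
  have hwP : P.getVert (pt - 1) ∈ P.support := mem_support_of_getVert (by omega)
  have hPtkw : (P.takeUntil (P.getVert (pt - 1)) hwP).length = pt - 1 :=
    length_takeUntil_eq hPind.1 (by omega) rfl hwP
  have hdw := length_take_add_drop P hwP
  have hLdw : (P.dropUntil (P.getVert (pt - 1)) hwP).length = (P.dropUntil t htP).length + 1 := by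
    omega
  have hgv : ∀ j, 1 ≤ j → j ≤ (P.dropUntil (P.getVert (pt - 1)) hwP).length →
      G.dist u ((P.dropUntil (P.getVert (pt - 1)) hwP).getVert j) = G.dist u t + (j - 1) := by
    intro j h1 h2
    rw [getVert_dropUntil P hwP j, hPtkw, (by omega : pt - 1 + j = pt + (j - 1)),
      ← getVert_dropUntil P htP (j - 1)]
    exact hFt (j - 1) (by omega)
  have hmono_w : MonoWalk G u (P.dropUntil (P.getVert (pt - 1)) hwP) := by
    rw [monoWalk_iff]
    intro i hi j hj hij
    by_cases hi0 : i = 0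
    · by_cases hj0 : j = 0
      · omega
      · exfalso
        rw [hi0, Walk.getVert_zero, hgv j (by omega) hj] at hij
        omega
    · by_cases hj0 : j = 0
      · exfalso
        rw [hj0, Walk.getVert_zero, hgv i (by omega) hi] at hij
        omega
      · rw [hgv i (by omega) hi, hgv j (by omega) hj] at hij
        omega
  have := hmax_t _ hwP hmono_w
  omega

lemma lbCaseI (hPind : IsInducedPath G P)
    (hsP : s ∈ P.support) (htP : t ∈ P.support)
    (hmono_s : MonoWalk G u (P.takeUntil s hsP))
    (hmax_s : ∀ s' (hs' : s' ∈ P.support), MonoWalk G u (P.takeUntil s' hs') →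
      (P.takeUntil s' hs').length ≤ (P.takeUntil s hsP).length)
    (hreach : ∀ w, G.Reachable u w)
    (hpspt : (P.takeUntil s hsP).length < (P.takeUntil t htP).length)
    (hft : G.dist u s < G.dist u t)
    (hsplus : G.dist u t ≤ G.dist u (P.getVert ((P.takeUntil s hsP).length + 1))) : False := by
  set ps := (P.takeUntil s hsP).length with hps
  have hptle := Walk.length_takeUntil_le P htP
  have hPs : P.getVert ps = s := by
    have h := getVert_takeUntil P hsP (le_refl (P.takeUntil s hsP).length)
    rw [Walk.getVert_length] at h
    exact h.symm
  have hfs : G.dist u s = ps := by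
    have h := monoWalk_from_u hmono_s (P.takeUntil s hsP).length (le_refl _)
    rwa [Walk.getVert_length] at h
  have hadj : G.Adj s (P.getVert (ps + 1)) := by
    have h := P.adj_getVert_succ (by omega : ps < P.length)
    rwa [hPs] at h
  have h1 := dist_le_of_adj' (hreach s) hadj
  have hwP : P.getVert (ps + 1) ∈ P.support := mem_support_of_getVert (by omega)
  have hPtkw : (P.takeUntil (P.getVert (ps + 1)) hwP).length = ps + 1 :=
    length_takeUntil_eq hPind.1 (by omega) rfl hwP
  have hmono_w : MonoWalk G u (P.takeUntil (P.getVert (ps + 1)) hwP) := by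
    apply monoWalk_of_affine (k := 0)
    intro i hi
    rw [hPtkw] at hi
    rw [getVert_takeUntil P hwP (by omega)]
    simp only [Nat.zero_add]
    by_cases hips : i ≤ ps
    · have h := monoWalk_from_u hmono_s i (by omega)
      rwa [getVert_takeUntil P hsP (by omega)] at h
    · have hieq : i = ps + 1 := by omega
      rw [hieq]
      omega
  have := hmax_s _ hwP hmono_w
  omega

end Cases

section CaseII
variable [DecidableEq V] {u v s t x : V} {P : G.Walk u v}

lemma ubCaseII (hstraight : Straight G u v) (hPind : IsInducedPath G P)
    (hPmin : ∀ Q : G.Walk u v, IsTrailPath G u v Q → P.length ≤ Q.length)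
    (hsP : s ∈ P.support) (htP : t ∈ P.support) (hxP : x ∈ P.support)
    (hmono_s : MonoWalk G u (P.takeUntil s hsP))
    (hmax_s : ∀ s' (hs' : s' ∈ P.support), MonoWalk G u (P.takeUntil s' hs') →
      (P.takeUntil s' hs').length ≤ (P.takeUntil s hsP).length)
    (hmax_t : ∀ t' (ht' : t' ∈ P.support), MonoWalk G u (P.dropUntil t' ht') →
      (P.dropUntil t' ht').length ≤ (P.dropUntil t htP).length)
    (hreach : ∀ w, G.Reachable u w) (hball : ∀ w, G.dist u w ≤ G.dist u v)
    (hpspx : (P.takeUntil s hsP).length < (P.takeUntil x hxP).length)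
    (hpxpt : (P.takeUntil x hxP).length < (P.takeUntil t htP).length)
    (hfx : G.dist u s < G.dist u x) : False := by
  classical
  set n := G.dist u v with hn
  set ps := (P.takeUntil s hsP).length with hps
  set px := (P.takeUntil x hxP).length with hpx
  set pt := (P.takeUntil t htP).length with hpt
  have hfs : G.dist u s = ps := by
    have h := monoWalk_from_u hmono_s (P.takeUntil s hsP).length (le_refl _)
    rwa [Walk.getVert_length] at h
  have hsplit_x := length_take_add_drop P hxP
  have hsplit_t := length_take_add_drop P htP
  have hkey : n + 1 ≤ G.dist u x + (P.dropUntil x hxP).length := by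
    have hdxv : G.dist u v ≤ G.dist u x + (P.dropUntil x hxP).length := by
      have h1 := dist_triangle' (hreach x) ⟨P.dropUntil x hxP⟩
      have h2 := SimpleGraph.dist_le (P.dropUntil x hxP)
      omega
    by_contra hcon
    have hmono : MonoWalk G u (P.dropUntil x hxP) := by
      apply monoWalk_of_affine (k := G.dist u x)
      intro j hj
      have hle1 := dist_getVert_le (P.dropUntil x hxP) (hreach x) j
      have hrj : G.Reachable ((P.dropUntil x hxP).getVert j) v :=
        ⟨(P.dropUntil x hxP).dropUntil _ (mem_support_of_getVert hj)⟩
      have hle2 := dist_getVert_to_end_le (P.dropUntil x hxP) j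
      have htri := dist_triangle' (hreach ((P.dropUntil x hxP).getVert j)) hrj
      omega
    have := hmax_t x hxP hmono
    omega
  obtain ⟨Q, ⟨hQp, hQl⟩, hxQ⟩ := hstraight x
  have hQind := isInducedPath_of_shortest Q hQl
  set pxQ := (Q.takeUntil x hxQ).length with hpxQ
  have hQgx : Q.getVert pxQ = x := by
    have h := getVert_takeUntil Q hxQ (le_refl (Q.takeUntil x hxQ).length)
    rw [Walk.getVert_length] at h
    exact h.symm
  have hpxQle := Walk.length_takeUntil_le Q hxQ
  have hfxQ : G.dist u x = pxQ := by
    have h := shortest_getVert_dist Q hQl (Walk.length_takeUntil_le Q hxQ)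
    rwa [hQgx] at h
  have hQsplit := length_take_add_drop Q hxQ
  have hQlen_n : Q.length = n := hQl
  obtain ⟨z, y, hzA, hyB, R, hRind, hpre, hsuf, hcase⟩ :=
    shortcut (P.takeUntil x hxP) (Q.dropUntil x hxQ)
      (isInducedPath_takeUntil hPind hxP) (isInducedPath_dropUntil hQind hxQ)
      ⟨x, Walk.end_mem_support _, x, Walk.start_mem_support _, Or.inl rfl⟩
  set LtkA := ((P.takeUntil x hxP).takeUntil z hzA).length with hLtkA
  set LdrB := ((Q.dropUntil x hxQ).dropUntil y hyB).length with hLdrB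
  have hLtkA_le : LtkA ≤ px := Walk.length_takeUntil_le (P.takeUntil x hxP) hzA
  obtain ⟨jy, hjyeq0, hjyle⟩ := Walk.mem_support_iff_exists_getVert.mp hyB
  have hjyeqQ : Q.getVert (pxQ + jy) = y := by
    rw [← getVert_dropUntil Q hxQ jy]
    exact hjyeq0
  have hfy : G.dist u y = pxQ + jy := by
    have h := shortest_getVert_dist Q hQl (by omega : pxQ + jy ≤ Q.length)
    rwa [hjyeqQ] at h
  have hBtkl : ((Q.dropUntil x hxQ).takeUntil y hyB).length = jy :=
    length_takeUntil_eq (hQp.dropUntil hxQ) hjyle hjyeq0 hyB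
  have hBsplit := length_take_add_drop (Q.dropUntil x hxQ) hyB
  have hzeq : (P.takeUntil x hxP).getVert LtkA = z := by
    have h := getVert_takeUntil (P.takeUntil x hxP) hzA (le_refl _)
    rw [Walk.getVert_length] at h
    exact h.symm
  have hPx : P.getVert px = x := by
    have h := getVert_takeUntil P hxP (le_refl (P.takeUntil x hxP).length)
    rw [Walk.getVert_length] at h
    exact h.symm
  have hy0 : jy = 0 → y = x := by
    intro h
    rw [h] at hjyeq0
    rw [← hjyeq0, Walk.getVert_zero]
  have hRlt : R.length < P.length := by
    have hbally := hball y
    rcases hcase with ⟨hzy, hlenR⟩ | ⟨hadjzy, hlenR⟩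
    · omega
    · by_cases hLpx : LtkA = px
      · have hzx : z = x := by
          rw [← hzeq, hLpx]
          exact Walk.getVert_length _
        have hyne : y ≠ x := fun h => hadjzy.ne (hzx.trans h.symm)
        have hjy1 : 1 ≤ jy := by
          rcases Nat.eq_zero_or_pos jy with h0 | h0
          · exact absurd (hy0 h0) hyne
          · omega
        omega
      · omega
  have hRn : R.length = n := by
    by_contra hne
    have htrail : IsTrailPath G u v R := ⟨hRind, fun hsp => hne hsp.2⟩
    have := hPmin R htrail
    omega
  have hRgd : ∀ i ≤ R.length, G.dist u (R.getVert i) = i :=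
    fun i hi => shortest_getVert_dist R (hRn.trans hn) hi
  have hLtkA_R : LtkA ≤ R.length := by
    rcases hcase with ⟨_, h⟩ | ⟨_, h⟩ <;> omega
  have hfz_pre : ∀ i ≤ LtkA, G.dist u (P.getVert i) = i := by
    intro i hi
    have h2 := hRgd i (by omega)
    rw [hpre i hi, getVert_takeUntil P hxP (by omega)] at h2
    exact h2
  have hPz : P.getVert LtkA = z := by
    rw [← hzeq]
    exact (getVert_takeUntil P hxP (by omega)).symm
  have hzP : z ∈ P.support := Walk.support_takeUntil_subset P hxP hzA
  have hPtkz : (P.takeUntil z hzP).length = LtkA :=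
    length_takeUntil_eq hPind.1 (by omega) hPz hzP
  have hmono_z : MonoWalk G u (P.takeUntil z hzP) := by
    apply monoWalk_of_affine (k := 0)
    intro i hi
    rw [hPtkz] at hi
    rw [getVert_takeUntil P hzP (by rw [hPtkz]; omega)]
    simpa using hfz_pre i hi
  have hzs := hmax_s z hzP hmono_z
  rw [hPtkz] at hzs
  rcases hcase with ⟨hzy, hlenR⟩ | ⟨hadjzy, hlenR⟩
  · have hfz : G.dist u z = LtkA := by
      have h := hRgd LtkA (by omega)
      rwa [hpre LtkA (le_refl _), hzeq] at h
    rw [← hzy] at hfy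
    omega
  · have hfy1 : G.dist u y = LtkA + 1 := by
      have h2 := hRgd (LtkA + 1) (by omega)
      have h0 := hsuf 0 (by omega)
      rw [Nat.add_zero, Walk.getVert_zero, (by omega : R.length - LdrB = LtkA + 1)] at h0
      rw [h0] at h2
      exact h2
    have hjy0 : jy = 0 := by omega
    have hyx : y = x := hy0 hjy0
    have hLps : LtkA = ps := by omega
    have hPs : P.getVert ps = s := by
      have h := getVert_takeUntil P hsP (le_refl (P.takeUntil s hsP).length)
      rw [Walk.getVert_length] at h
      exact h.symm
    have hzseq : z = s := by rw [← hPz, hLps, hPs]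
    rw [hzseq, hyx] at hadjzy
    rcases induced_adj_consec hPind (by omega : ps ≤ P.length) (by omega : px ≤ P.length)
      hPs hPx hadjzy with hc | hc
    · have hmono_x : MonoWalk G u (P.takeUntil x hxP) := by
        apply monoWalk_of_affine (k := 0)
        intro i hi
        rw [getVert_takeUntil P hxP hi]
        simp only [Nat.zero_add]
        by_cases hips : i ≤ ps
        · have h := monoWalk_from_u hmono_s i (by omega)
          rwa [getVert_takeUntil P hsP (by omega)] at h
        · have hieq : i = px := by omega
          rw [hieq, hPx]
          omega
      have := hmax_s x hxP hmono_x
      omega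
    · omega


lemma lbCaseII (hstraight : Straight G u v) (hPind : IsInducedPath G P)
    (hPmin : ∀ Q : G.Walk u v, IsTrailPath G u v Q → P.length ≤ Q.length)
    (hsP : s ∈ P.support) (htP : t ∈ P.support) (hxP : x ∈ P.support)
    (hmax_s : ∀ s' (hs' : s' ∈ P.support), MonoWalk G u (P.takeUntil s' hs') →
      (P.takeUntil s' hs').length ≤ (P.takeUntil s hsP).length)
    (hmono_t : MonoWalk G u (P.dropUntil t htP))
    (hmax_t : ∀ t' (ht' : t' ∈ P.support), MonoWalk G u (P.dropUntil t' ht') →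
      (P.dropUntil t' ht').length ≤ (P.dropUntil t htP).length)
    (hreach : ∀ w, G.Reachable u w) (hball : ∀ w, G.dist u w ≤ G.dist u v)
    (hpspx : (P.takeUntil s hsP).length < (P.takeUntil x hxP).length)
    (hpxpt : (P.takeUntil x hxP).length < (P.takeUntil t htP).length)
    (hfx : G.dist u x < G.dist u t) : False := by
  classical
  set n := G.dist u v with hn
  set ps := (P.takeUntil s hsP).length with hps
  set px := (P.takeUntil x hxP).length with hpx
  set pt := (P.takeUntil t htP).length with hpt
  have hsplit_x := length_take_add_drop P hxP
  have hsplit_t := length_take_add_drop P htP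
  have hFt := monoWalk_to_v hmono_t (hreach t) hball
  have hftn : G.dist u t + (P.dropUntil t htP).length = n := by
    have h := hFt (P.dropUntil t htP).length (le_refl _)
    rw [Walk.getVert_length] at h
    omega
  have hself : G.dist u u = 0 := SimpleGraph.dist_self
  have hkey : G.dist u x + 1 ≤ px := by
    have hfxle : G.dist u x ≤ px := SimpleGraph.dist_le (P.takeUntil x hxP)
    by_contra hcon
    have hmono : MonoWalk G u (P.takeUntil x hxP) := by
      apply monoWalk_of_affine (k := 0)
      intro i hi
      have hle1 := dist_getVert_le (P.takeUntil x hxP) (Reachable.refl u) i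
      have hri : G.Reachable ((P.takeUntil x hxP).getVert i) x :=
        ⟨(P.takeUntil x hxP).dropUntil _ (mem_support_of_getVert hi)⟩
      have hle2 := dist_getVert_to_end_le (P.takeUntil x hxP) i
      have htri := dist_triangle' (hreach ((P.takeUntil x hxP).getVert i)) hri
      omega
    have := hmax_s x hxP hmono
    omega
  obtain ⟨Q, ⟨hQp, hQl⟩, hxQ⟩ := hstraight x
  have hQind := isInducedPath_of_shortest Q hQl
  set pxQ := (Q.takeUntil x hxQ).length with hpxQ
  have hQgx : Q.getVert pxQ = x := by
    have h := getVert_takeUntil Q hxQ (le_refl (Q.takeUntil x hxQ).length)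
    rw [Walk.getVert_length] at h
    exact h.symm
  have hpxQle := Walk.length_takeUntil_le Q hxQ
  have hfxQ : G.dist u x = pxQ := by
    have h := shortest_getVert_dist Q hQl (Walk.length_takeUntil_le Q hxQ)
    rwa [hQgx] at h
  obtain ⟨z, y, hzA, hyB, R, hRind, hpre, hsuf, hcase⟩ :=
    shortcut (Q.takeUntil x hxQ) (P.dropUntil x hxP)
      (isInducedPath_takeUntil hQind hxQ) (isInducedPath_dropUntil hPind hxP)
      ⟨x, Walk.end_mem_support _, x, Walk.start_mem_support _, Or.inl rfl⟩
  set LtkA := ((Q.takeUntil x hxQ).takeUntil z hzA).length with hLtkA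
  set LdrB := ((P.dropUntil x hxP).dropUntil y hyB).length with hLdrB
  have hLtkA_le : LtkA ≤ pxQ := Walk.length_takeUntil_le (Q.takeUntil x hxQ) hzA
  obtain ⟨jy, hjyeq0, hjyle⟩ := Walk.mem_support_iff_exists_getVert.mp hyB
  have hPpy : P.getVert (px + jy) = y := by
    rw [← getVert_dropUntil P hxP jy]
    exact hjyeq0
  have hBtkl : ((P.dropUntil x hxP).takeUntil y hyB).length = jy :=
    length_takeUntil_eq (hPind.1.dropUntil hxP) hjyle hjyeq0 hyB
  have hBsplit := length_take_add_drop (P.dropUntil x hxP) hyB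
  have hzeq : (Q.takeUntil x hxQ).getVert LtkA = z := by
    have h := getVert_takeUntil (Q.takeUntil x hxQ) hzA (le_refl _)
    rw [Walk.getVert_length] at h
    exact h.symm
  have hy0 : jy = 0 → y = x := by
    intro h
    rw [h] at hjyeq0
    rw [← hjyeq0, Walk.getVert_zero]
  have hRlt : R.length < P.length := by
    rcases hcase with ⟨hzy, hlenR⟩ | ⟨hadjzy, hlenR⟩
    · omega
    · by_cases hLpx : LtkA = pxQ
      · have hzx : z = x := by
          rw [← hzeq, hLpx]
          exact Walk.getVert_length _
        have hyne : y ≠ x := fun h => hadjzy.ne (hzx.trans h.symm)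
        have hjy1 : 1 ≤ jy := by
          rcases Nat.eq_zero_or_pos jy with h0 | h0
          · exact absurd (hy0 h0) hyne
          · omega
        omega
      · omega
  have hRn : R.length = n := by
    by_contra hne
    have htrail : IsTrailPath G u v R := ⟨hRind, fun hsp => hne hsp.2⟩
    have := hPmin R htrail
    omega
  have hRgd : ∀ i ≤ R.length, G.dist u (R.getVert i) = i :=
    fun i hi => shortest_getVert_dist R (hRn.trans hn) hi
  have hLtkA_R : LtkA ≤ R.length := by
    rcases hcase with ⟨_, h⟩ | ⟨_, h⟩ <;> omega
  have hLdrB_R : LdrB ≤ R.length := by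
    rcases hcase with ⟨_, h⟩ | ⟨_, h⟩ <;> omega
  have hfz : G.dist u z = LtkA := by
    have h := hRgd LtkA (by omega)
    rwa [hpre LtkA (le_refl _), hzeq] at h
  have hfsuffix : ∀ j ≤ LdrB,
      G.dist u (((P.dropUntil x hxP).dropUntil y hyB).getVert j) = R.length - LdrB + j := by
    intro j hj
    have h2 := hRgd (R.length - LdrB + j) (by omega)
    rwa [hsuf j hj] at h2
  have hfy : G.dist u y = R.length - LdrB := by
    have h := hfsuffix 0 (by omega)
    rwa [Nat.add_zero, Walk.getVert_zero] at h
  have hyP : y ∈ P.support := Walk.support_dropUntil_subset P hxP hyB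
  have hPtky : (P.takeUntil y hyP).length = px + jy :=
    length_takeUntil_eq hPind.1 (by omega) hPpy hyP
  have hPdy := length_take_add_drop P hyP
  have hLdy : (P.dropUntil y hyP).length = LdrB := by omega
  have hmono_y : MonoWalk G u (P.dropUntil y hyP) := by
    apply monoWalk_of_affine (k := R.length - LdrB)
    intro j hj
    rw [hLdy] at hj
    rw [getVert_dropUntil P hyP j, hPtky, (by omega : px + jy + j = px + (jy + j)),
      ← getVert_dropUntil P hxP (jy + j)]
    have e2 : ((P.dropUntil x hxP).dropUntil y hyB).getVert j
        = (P.dropUntil x hxP).getVert (jy + j) := by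
      rw [getVert_dropUntil (P.dropUntil x hxP) hyB j, hBtkl]
    rw [← e2]
    exact hfsuffix j hj
  have hyLd := hmax_t y hyP hmono_y
  rw [hLdy] at hyLd
  rcases hcase with ⟨hzy, hlenR⟩ | ⟨hadjzy, hlenR⟩
  · rw [← hzy] at hfy
    omega
  · have hRml : R.length - LdrB = LtkA + 1 := by omega
    rw [hRml] at hfy
    have hfyt : G.dist u y = G.dist u t := by omega
    have hLfx : LtkA = pxQ := by omega
    have hzx : z = x := by
      rw [← hzeq, hLfx]
      exact Walk.getVert_length _
    have hPt : P.getVert pt = t := by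
      have h := getVert_takeUntil P htP (le_refl (P.takeUntil t htP).length)
      rw [Walk.getVert_length] at h
      exact h.symm
    have hpypt : px + jy = pt := by omega
    have hyt : y = t := by rw [← hPpy, hpypt, hPt]
    rw [hzx, hyt] at hadjzy
    have hPx : P.getVert px = x := by
      have h := getVert_takeUntil P hxP (le_refl (P.takeUntil x hxP).length)
      rw [Walk.getVert_length] at h
      exact h.symm
    rcases induced_adj_consec hPind (by omega : px ≤ P.length) (by omega : pt ≤ P.length)
      hPx hPt hadjzy with hc | hc
    · have hmono_x2 : MonoWalk G u (P.dropUntil x hxP) := by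
        apply monoWalk_of_affine (k := G.dist u x)
        intro j hj
        rw [getVert_dropUntil P hxP j]
        cases j with
        | zero =>
          rw [Nat.add_zero, hPx]
          omega
        | succ j' =>
          rw [(by omega : px + (j' + 1) = pt + j'), ← getVert_dropUntil P htP j']
          have h := hFt j' (by omega)
          rw [h]
          omega
      have := hmax_t x hxP hmono_x2
      omega
    · omega

end CaseII

end Statement0Aux


/-- If `P` is a shortest `uv`-trail of a `uv`-straight graph `G`
with twist pair `(s, t)`, then every vertex `x` of `P[s,t]` satisfies
`h(t) ≤ h(x) ≤ h(s)`. -/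
theorem statement0 [Fintype V] [DecidableEq V] (G : SimpleGraph V) (u v : V)
    (hstraight : Straight G u v)
    (P : G.Walk u v) (hP : IsShortestTrail G u v P)
    (s t : V) (htwist : IsTwistPair G u v P s t)
    (hs : s ∈ P.support) (ht : t ∈ (P.dropUntil s hs).support) :
    ∀ x ∈ ((P.dropUntil s hs).takeUntil t ht).support,
      G.dist u t ≤ G.dist u x ∧ G.dist u x ≤ G.dist u s := by
  classical
  open Statement0Aux in
  intro x hx
  obtain ⟨⟨hPind, hPnotshort⟩, hPmin⟩ := hP
  obtain ⟨hs_tw, ht_tw, hmono_s', hmono_t', hmax_s', hmax_t'⟩ := htwist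
  have htP : t ∈ P.support := Walk.support_dropUntil_subset P hs ht
  have hmono_s : MonoWalk G u (P.takeUntil s hs) := hmono_s'
  have hmono_t : MonoWalk G u (P.dropUntil t htP) := hmono_t'
  have hmax_s : ∀ s' (hs' : s' ∈ P.support), MonoWalk G u (P.takeUntil s' hs') →
      (P.takeUntil s' hs').length ≤ (P.takeUntil s hs).length := hmax_s'
  have hmax_t : ∀ t' (ht' : t' ∈ P.support), MonoWalk G u (P.dropUntil t' ht') →
      (P.dropUntil t' ht').length ≤ (P.dropUntil t htP).length := hmax_t'
  have hreach : ∀ w, G.Reachable u w := by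
    intro w
    obtain ⟨Q, _, hw⟩ := hstraight w
    exact ⟨Q.takeUntil w hw⟩
  have hball : ∀ w, G.dist u w ≤ G.dist u v := by
    intro w
    obtain ⟨Q, ⟨hQp, hQl⟩, hw⟩ := hstraight w
    obtain ⟨i, hieq, hile⟩ := Walk.mem_support_iff_exists_getVert.mp hw
    have h := shortest_getVert_dist Q hQl hile
    rw [hieq] at h
    omega
  -- basic position bookkeeping
  have hdsl := length_take_add_drop P hs
  have hmt0le := Walk.length_takeUntil_le (P.dropUntil s hs) ht
  have hPt_idx : P.getVert ((P.takeUntil s hs).length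
      + ((P.dropUntil s hs).takeUntil t ht).length) = t := by
    have h1 := getVert_takeUntil (P.dropUntil s hs) ht
      (le_refl ((P.dropUntil s hs).takeUntil t ht).length)
    rw [Walk.getVert_length] at h1
    rw [← getVert_dropUntil P hs]
    exact h1.symm
  have hpt_eq : (P.takeUntil t htP).length
      = (P.takeUntil s hs).length + ((P.dropUntil s hs).takeUntil t ht).length :=
    length_takeUntil_eq hPind.1 (by omega) hPt_idx htP
  have hPs : P.getVert ((P.takeUntil s hs).length) = s := by
    have h := getVert_takeUntil P hs (le_refl (P.takeUntil s hs).length)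
    rw [Walk.getVert_length] at h
    exact h.symm
  have hfs : G.dist u s = (P.takeUntil s hs).length := by
    have h := monoWalk_from_u hmono_s (P.takeUntil s hs).length (le_refl _)
    rwa [Walk.getVert_length] at h
  -- upper bound for every vertex of the middle segment
  have hUB : ∀ j ≤ ((P.dropUntil s hs).takeUntil t ht).length,
      G.dist u (P.getVert ((P.takeUntil s hs).length + j)) ≤ G.dist u s := by
    intro j hj
    by_contra hgt
    push_neg at hgt
    have hj1 : 1 ≤ j := by
      rcases Nat.eq_zero_or_pos j with h0 | h0
      · rw [h0, Nat.add_zero, hPs] at hgt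
        omega
      · exact h0
    have hxmem : P.getVert ((P.takeUntil s hs).length + j) ∈ P.support :=
      mem_support_of_getVert (by omega)
    have hpxeq : (P.takeUntil (P.getVert ((P.takeUntil s hs).length + j)) hxmem).length
        = (P.takeUntil s hs).length + j :=
      length_takeUntil_eq hPind.1 (by omega) rfl hxmem
    by_cases hjt : j = ((P.dropUntil s hs).takeUntil t ht).length
    · subst hjt
      rw [hPt_idx] at hgt
      by_cases hother : ∃ j', 1 ≤ j' ∧ j' < ((P.dropUntil s hs).takeUntil t ht).length ∧
          G.dist u s < G.dist u (P.getVert ((P.takeUntil s hs).length + j'))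
      · obtain ⟨j', h1', h2', h3'⟩ := hother
        have hxmem' : P.getVert ((P.takeUntil s hs).length + j') ∈ P.support :=
          mem_support_of_getVert (by omega)
        have hpxeq' : (P.takeUntil (P.getVert ((P.takeUntil s hs).length + j')) hxmem').length
            = (P.takeUntil s hs).length + j' :=
          length_takeUntil_eq hPind.1 (by omega) rfl hxmem'
        exact ubCaseII hstraight hPind hPmin hs htP hxmem' hmono_s hmax_s hmax_t hreach hball
          (by omega) (by omega) h3'
      · push_neg at hother
        apply ubCaseI hPind hs htP hmono_t hmax_t hreach hball (by omega) hgt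
        rw [(by omega : (P.takeUntil t htP).length - 1
          = (P.takeUntil s hs).length + (((P.dropUntil s hs).takeUntil t ht).length - 1))]
        rcases Nat.eq_zero_or_pos (((P.dropUntil s hs).takeUntil t ht).length - 1) with h0 | h0
        · rw [h0, Nat.add_zero, hPs]
        · exact hother _ h0 (by omega)
    · exact ubCaseII hstraight hPind hPmin hs htP hxmem hmono_s hmax_s hmax_t hreach hball
        (by omega) (by omega) hgt
  -- lower bound for every vertex of the middle segment
  have hLB : ∀ j ≤ ((P.dropUntil s hs).takeUntil t ht).length,
      G.dist u t ≤ G.dist u (P.getVert ((P.takeUntil s hs).length + j)) := by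
    intro j hj
    by_contra hlt
    push_neg at hlt
    have hjmt : j < ((P.dropUntil s hs).takeUntil t ht).length := by
      rcases Nat.lt_or_ge j ((P.dropUntil s hs).takeUntil t ht).length with h0 | h0
      · exact h0
      · exfalso
        have hje : j = ((P.dropUntil s hs).takeUntil t ht).length := by omega
        rw [hje, hPt_idx] at hlt
        omega
    have hxmem : P.getVert ((P.takeUntil s hs).length + j) ∈ P.support :=
      mem_support_of_getVert (by omega)
    have hpxeq : (P.takeUntil (P.getVert ((P.takeUntil s hs).length + j)) hxmem).length
        = (P.takeUntil s hs).length + j :=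
      length_takeUntil_eq hPind.1 (by omega) rfl hxmem
    by_cases hj1 : 1 ≤ j
    · exact lbCaseII hstraight hPind hPmin hs htP hxmem hmax_s hmono_t hmax_t hreach hball
        (by omega) (by omega) hlt
    · have hj0 : j = 0 := by omega
      rw [hj0, Nat.add_zero, hPs] at hlt
      have hmt1 : 1 ≤ ((P.dropUntil s hs).takeUntil t ht).length := by omega
      by_cases hother : ∃ j', 1 ≤ j' ∧ j' < ((P.dropUntil s hs).takeUntil t ht).length ∧
          G.dist u (P.getVert ((P.takeUntil s hs).length + j')) < G.dist u t
      · obtain ⟨j', h1', h2', h3'⟩ := hother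
        have hxmem' : P.getVert ((P.takeUntil s hs).length + j') ∈ P.support :=
          mem_support_of_getVert (by omega)
        have hpxeq' : (P.takeUntil (P.getVert ((P.takeUntil s hs).length + j')) hxmem').length
            = (P.takeUntil s hs).length + j' :=
          length_takeUntil_eq hPind.1 (by omega) rfl hxmem'
        exact lbCaseII hstraight hPind hPmin hs htP hxmem' hmax_s hmono_t hmax_t hreach hball
          (by omega) (by omega) h3'
      · push_neg at hother
        apply lbCaseI hPind hs htP hmono_s hmax_s hreach (by omega) hlt
        rcases Nat.lt_or_ge 1 ((P.dropUntil s hs).takeUntil t ht).length with h1 | h1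
        · exact hother 1 (le_refl 1) h1
        · have he : ((P.dropUntil s hs).takeUntil t ht).length = 1 := by omega
          have : P.getVert ((P.takeUntil s hs).length + 1) = t := by
            rw [← hPt_idx, he]
          rw [this]
  -- conclude for the given x
  obtain ⟨k, hkeq, hkle⟩ := Walk.mem_support_iff_exists_getVert.mp hx
  rw [getVert_takeUntil (P.dropUntil s hs) ht hkle, getVert_dropUntil P hs k] at hkeq
  have h1 := hUB k hkle
  have h2 := hLB k hkle
  rw [hkeq] at h1 h2
  exact ⟨h2, h1⟩
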